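/- Call an m × m real matrix A generic if every square submatrix A[I,J] (obtained by keeping the rows in I and columns in J, with |I| = |J| ≥ 1) has nonzero determinant. If A is generic and invertible, then A^{-1} is generic. -/

import Mathlib

/-- A square real matrix is generic if every square submatrix (rows from `I`,
columns from `J`, `|I| = |J| ≥ 1`) has nonzero determinant. -/
def IsGeneric {m : ℕ} (A : Matrix (Fin m) (Fin m) ℝ) : Prop :=
  ∀ (I J : Finset (Fin m)) (h : I.card = J.card), I.Nonempty →
    (A.submatrix (fun i : Fin I.card => ((I.orderIsoOfFin rfl i : I) : Fin m))
      (fun j : Fin I.card => ((J.orderIsoOfFin h.symm j : J) : Fin m))).det ≠ 0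

/-- **Lemma 5.6 (i):** the inverse of a generic invertible matrix is generic. -/
theorem inverse_of_generic_isGeneric {m : ℕ}
    (A B : Matrix (Fin m) (Fin m) ℝ)
    (hAB : A * B = 1) (hBA : B * A = 1)
    (hA : IsGeneric A) : IsGeneric B := by
  intro I J h hI
  classical
  have hcc : Jᶜ.card = Iᶜ.card := by simp [Finset.card_compl, h]
  -- equivalences Fin I.card ⊕ Fin Jᶜ.card ≃ Fin m
  let eI : Fin I.card ⊕ Fin Jᶜ.card ≃ Fin m :=
    (Equiv.sumCongr ((I.orderIsoOfFin rfl).toEquiv)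
      (((Iᶜ).orderIsoOfFin hcc.symm).toEquiv.trans
        (Equiv.subtypeEquivRight fun x => Finset.mem_compl))).trans
      (Equiv.sumCompl (· ∈ I))
  let eJ : Fin I.card ⊕ Fin Jᶜ.card ≃ Fin m :=
    (Equiv.sumCongr ((J.orderIsoOfFin h.symm).toEquiv)
      (((Jᶜ).orderIsoOfFin rfl).toEquiv.trans
        (Equiv.subtypeEquivRight fun x => Finset.mem_compl))).trans
      (Equiv.sumCompl (· ∈ J))
  set Ap := A.submatrix eJ eI with hAp
  set Bp := B.submatrix eI eJ with hBp
  have hApBp : Ap * Bp = 1 := by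
    rw [hAp, hBp, Matrix.submatrix_mul_equiv, hAB, Matrix.submatrix_one_equiv]
  set A11 := Ap.toBlocks₁₁ with hA11
  set A12 := Ap.toBlocks₁₂ with hA12
  set A21 := Ap.toBlocks₂₁ with hA21
  set A22 := Ap.toBlocks₂₂ with hA22
  set B11 := Bp.toBlocks₁₁ with hB11
  set B12 := Bp.toBlocks₁₂ with hB12
  set B21 := Bp.toBlocks₂₁ with hB21
  set B22 := Bp.toBlocks₂₂ with hB22
  have h1 : Matrix.fromBlocks (A11 * B11 + A12 * B21) (A11 * B12 + A12 * B22)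
      (A21 * B11 + A22 * B21) (A21 * B12 + A22 * B22) =
      Matrix.fromBlocks 1 0 0 1 := by
    rw [← Matrix.fromBlocks_multiply, Matrix.fromBlocks_toBlocks,
      Matrix.fromBlocks_toBlocks, hApBp, Matrix.fromBlocks_one]
  obtain ⟨e11, -, e21, -⟩ := Matrix.fromBlocks_inj.mp h1
  -- Jacobi's identity via block multiplication
  have hmul : Ap * Matrix.fromBlocks B11 0 B21 1 = Matrix.fromBlocks 1 A12 0 A22 := by
    conv_lhs => rw [← Matrix.fromBlocks_toBlocks Ap]
    rw [Matrix.fromBlocks_multiply, Matrix.fromBlocks_inj]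
    refine ⟨e11, by simp [hA12], e21, by simp [hA22]⟩
  have hdet : Ap.det * B11.det = A22.det := by
    have := congrArg Matrix.det hmul
    simp only [Matrix.det_mul, Matrix.det_fromBlocks_zero₁₂, Matrix.det_fromBlocks_zero₂₁,
      Matrix.det_one, one_mul, mul_one] at this
    exact this
  have hApdet : Ap.det ≠ 0 :=
    left_ne_zero_of_mul_eq_one (a := Ap.det) (b := Bp.det)
      (by rw [← Matrix.det_mul, hApBp, Matrix.det_one])
  have hA22 : A22.det ≠ 0 := by
    rcases Finset.eq_empty_or_nonempty Jᶜ with he | hne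
    · have h0 : Jᶜ.card = 0 := by simp [he]
      haveI : IsEmpty (Fin Jᶜ.card) := by rw [h0]; infer_instance
      simp [Matrix.det_isEmpty]
    · have hgen := hA Jᶜ Iᶜ hcc hne
      have heq : A22 = A.submatrix
          (fun i : Fin Jᶜ.card => ((Jᶜ.orderIsoOfFin rfl i : {x // x ∈ Jᶜ}) : Fin m))
          (fun j : Fin Jᶜ.card => ((Iᶜ.orderIsoOfFin hcc.symm j : {x // x ∈ Iᶜ}) : Fin m)) := by
        ext i j
        simp [hA22, Matrix.toBlocks₂₂, hAp, eI, eJ]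
      rw [heq]
      convert hgen using 2
  have hB11det : B11.det ≠ 0 := by
    intro h0
    rw [h0, mul_zero] at hdet
    exact hA22 hdet.symm
  have : B.submatrix (fun i : Fin I.card => ((I.orderIsoOfFin rfl i : I) : Fin m))
      (fun j : Fin I.card => ((J.orderIsoOfFin h.symm j : J) : Fin m)) = B11 := by
    ext i j
    simp only [hB11, Matrix.toBlocks₁₁, hBp, Matrix.submatrix_apply, Matrix.of_apply]
    simp [eI, eJ]
  rw [this]
  exact hB11det
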